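/- arXiv:0704.1493 — 3 statements merged into one kernel-verified Lean document; each statement's English description precedes it below -/
import Mathlib

section
/- The graph G on the 42 ordered pencils of the Fano plane, with adjacency as defined, is 12-regular. -/
/-- Points of the Fano plane: we use `1,…,7` inside `Fin 8`. -/
abbrev FPt := Fin 8

/-- The seven lines of the Fano plane. -/
def fanoLines : Finset (Finset FPt) :=
  {{1,2,3},{1,4,5},{1,6,7},{2,4,6},{2,5,7},{3,4,7},{3,5,6}}

/-- The seven points of the Fano plane. -/
def fanoPoints : Finset FPt := {1,2,3,4,5,6,7}

/-- `(p, pairs)` is an ordered pencil if for each `i`, `insert p (pairs i)`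
is a Fano line, and the three (2-element) pairs are distinct. -/
def IsPencil (v : FPt × (Fin 3 → Finset FPt)) : Prop :=
  v.1 ∈ fanoPoints ∧
  (∀ i, (v.2 i).card = 2 ∧ v.1 ∉ v.2 i ∧ insert v.1 (v.2 i) ∈ fanoLines) ∧
  Function.Injective v.2

instance : DecidablePred IsPencil := fun v => by
  unfold IsPencil Function.Injective; infer_instance

/-- Ordered pencils of the Fano plane: the vertices of the graph `G`. -/
def Pencil := {v : FPt × (Fin 3 → Finset FPt) // IsPencil v}

instance : DecidableEq Pencil := by unfold Pencil; infer_instance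
instance : Fintype Pencil := by unfold Pencil; infer_instance

/-- Adjacency: different base points, and the pairs in each position meet
in exactly one point. -/
def pAdj (v w : Pencil) : Prop :=
  v.1.1 ≠ w.1.1 ∧ ∀ i, (v.1.2 i ∩ w.1.2 i).card = 1

instance : DecidableRel pAdj := fun v w => by unfold pAdj; infer_instance

/-- The graph `G` on the 42 ordered pencils of the Fano plane. -/
def G : SimpleGraph Pencil where
  Adj := pAdj
  symm := ⟨fun v w h => ⟨h.1.symm, fun i => by rw [Finset.inter_comm]; exact h.2 i⟩⟩
  loopless := ⟨fun v h => h.1 rfl⟩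

instance : DecidableRel G.Adj := fun v w => by
  change Decidable (pAdj v w); infer_instance

/-- Table of the three pairs through each Fano point. -/
def pairAt : FPt → Fin 3 → Finset FPt :=
  ![![∅,∅,∅],
    ![{2,3},{4,5},{6,7}],
    ![{1,3},{4,6},{5,7}],
    ![{1,2},{4,7},{5,6}],
    ![{1,5},{2,6},{3,7}],
    ![{1,4},{2,7},{3,6}],
    ![{1,7},{2,4},{3,5}],
    ![{1,6},{2,5},{3,4}]]

set_option maxRecDepth 10000 in
lemma pairAt_complete : ∀ p : FPt, ∀ s : Finset FPt, p ∈ fanoPoints →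
    s.card = 2 → p ∉ s → insert p s ∈ fanoLines → ∃ j : Fin 3, s = pairAt p j := by
  decide

lemma pairAt_inj : ∀ p : FPt, p ∈ fanoPoints → Function.Injective (pairAt p) := by
  decide

lemma pairAt_good : ∀ p : FPt, p ∈ fanoPoints → ∀ k : Fin 3,
    (pairAt p k).card = 2 ∧ p ∉ pairAt p k ∧ insert p (pairAt p k) ∈ fanoLines := by
  decide

lemma vec3_inj : ∀ u v w : Fin 3, u ≠ v → u ≠ w → v ≠ w →
    Function.Injective ![u, v, w] := by
  decide

abbrev QT := FPt × Fin 3 × Fin 3 × Fin 3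

def qList : List QT := [(1,0,1,2), (1,0,2,1), (1,1,0,2), (1,1,2,0), (1,2,0,1), (1,2,1,0), (2,0,1,2), (2,0,2,1), (2,1,0,2), (2,1,2,0), (2,2,0,1), (2,2,1,0), (3,0,1,2), (3,0,2,1), (3,1,0,2), (3,1,2,0), (3,2,0,1), (3,2,1,0), (4,0,1,2), (4,0,2,1), (4,1,0,2), (4,1,2,0), (4,2,0,1), (4,2,1,0), (5,0,1,2), (5,0,2,1), (5,1,0,2), (5,1,2,0), (5,2,0,1), (5,2,1,0), (6,0,1,2), (6,0,2,1), (6,1,0,2), (6,1,2,0), (6,2,0,1), (6,2,1,0), (7,0,1,2), (7,0,2,1), (7,1,0,2), (7,1,2,0), (7,2,0,1), (7,2,1,0)]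

set_option maxRecDepth 4000 in
def qFinset : Finset QT := ⟨(qList : Multiset QT), by decide⟩

set_option maxRecDepth 10000 in
lemma qmem : ∀ x : QT, (x.1 ∈ fanoPoints ∧ x.2.1 ≠ x.2.2.1 ∧ x.2.1 ≠ x.2.2.2 ∧
    x.2.2.1 ≠ x.2.2.2) ↔ x ∈ qFinset := by
  decide

def eQ (x : QT) : FPt × (Fin 3 → Finset FPt) :=
  (x.1, fun i => pairAt x.1 (![x.2.1, x.2.2.1, x.2.2.2] i))

lemma isPencil_eQ : ∀ x ∈ qFinset, IsPencil (eQ x) := by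
  intro x hx
  obtain ⟨hp, h1, h2, h3⟩ := (qmem x).mpr hx
  exact ⟨hp, fun i => pairAt_good x.1 hp _,
    fun i j hij => vec3_inj _ _ _ h1 h2 h3 (pairAt_inj x.1 hp hij)⟩

lemma classify : ∀ u : FPt × (Fin 3 → Finset FPt), IsPencil u →
    ∃ x ∈ qFinset, eQ x = u := by
  rintro ⟨p, pr⟩ ⟨hp, hl, hinj⟩
  have hch : ∀ i, ∃ j, pr i = pairAt p j := fun i =>
    pairAt_complete p (pr i) hp (hl i).1 (hl i).2.1 (hl i).2.2
  choose j hjj using hch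
  have hjinj : ∀ a b : Fin 3, j a = j b → a = b := by
    intro a b hab
    apply hinj
    show pr a = pr b
    rw [hjj a, hjj b, hab]
  refine ⟨(p, j 0, j 1, j 2), (qmem _).mp ⟨hp, ?_, ?_, ?_⟩, ?_⟩
  · intro h; exact absurd (hjinj 0 1 h) (by decide)
  · intro h; exact absurd (hjinj 0 2 h) (by decide)
  · intro h; exact absurd (hjinj 1 2 h) (by decide)
  · refine Prod.ext rfl ?_
    funext i
    show pairAt p (![j 0, j 1, j 2] i) = pr i
    fin_cases i <;> exact (hjj _).symm

lemma eQ_inj : ∀ x ∈ qFinset, ∀ y ∈ qFinset, eQ x = eQ y → x = y := by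
  rintro ⟨p, a, b, c⟩ hx ⟨q, a', b', c'⟩ hy h1
  have hp : p ∈ fanoPoints := ((qmem _).mpr hx).1
  have hpq : p = q := congrArg Prod.fst h1
  subst hpq
  have h2 := congrArg Prod.snd h1
  have e0 := pairAt_inj p hp (congrFun h2 0)
  have e1 := pairAt_inj p hp (congrFun h2 1)
  have e2 := pairAt_inj p hp (congrFun h2 2)
  simp only [Matrix.cons_val_zero, Matrix.cons_val_one, Matrix.head_cons] at e0 e1 e2
  exact Prod.ext rfl (Prod.ext e0 (Prod.ext e1 e2))

def rawAdj (u w : FPt × (Fin 3 → Finset FPt)) : Prop :=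
  u.1 ≠ w.1 ∧ ∀ i, (u.2 i ∩ w.2 i).card = 1

instance : DecidableRel rawAdj := fun u w => by unfold rawAdj; infer_instance

set_option maxRecDepth 100000 in
lemma keyL : ∀ x ∈ qList,
    (qList.filter (fun y => decide (rawAdj (eQ x) (eQ y)))).length = 12 := by
  intro x hx
  fin_cases hx <;> decide

lemma key : ∀ x ∈ qFinset,
    (qFinset.filter (fun y => rawAdj (eQ x) (eQ y))).card = 12 := by
  intro x hx
  have hxl : x ∈ qList := by
    have := hx
    simpa [qFinset, Finset.mem_mk] using this
  have : (qFinset.filter (fun y => rawAdj (eQ x) (eQ y))).card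
      = (qList.filter (fun y => decide (rawAdj (eQ x) (eQ y)))).length := rfl
  rw [this]
  exact keyL x hxl

set_option maxRecDepth 1000000 in
theorem G_twelve_regular : ∀ v : Pencil, G.degree v = 12 := by
  intro v
  obtain ⟨x, hx, hex⟩ := classify v.1 v.2
  rw [SimpleGraph.degree, SimpleGraph.neighborFinset_eq_filter]
  rw [show (Finset.univ.filter (G.Adj v)).card
      = (qFinset.filter (fun y => rawAdj (eQ x) (eQ y))).card from ?_]
  · exact key x hx
  · symm
    apply Finset.card_bij (fun y hy => (⟨eQ y, isPencil_eQ y (Finset.mem_filter.mp hy).1⟩ : Pencil))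
    · intro a ha
      rw [Finset.mem_filter] at ha; refine (@Finset.mem_filter _ _ ((inferInstance : DecidableRel G.Adj) v) _ _).mpr ?_
      refine ⟨Finset.mem_univ _, ?_⟩
      have h := ha.2
      rw [hex] at h
      exact ⟨h.1, h.2⟩
    · intro a ha b hb h
      exact eQ_inj a (Finset.mem_filter.mp ha).1 b (Finset.mem_filter.mp hb).1
        (congrArg Subtype.val h)
    · intro b hb
      obtain ⟨y, hy, hey⟩ := classify b.1 b.2
      refine ⟨y, ?_, ?_⟩
      · rw [Finset.mem_filter]
        refine ⟨hy, ?_⟩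
        rw [hex, hey]
        exact ((@Finset.mem_filter _ _ ((inferInstance : DecidableRel G.Adj) v) _ _).mp hb).2
      · exact Subtype.ext hey
end

section
/- If two ordered pencils v and v' are adjacent in G, then the three intersection points (one from each index position a, b, c) form a line of the Fano plane. -/
def pairSets (p : FPt) : Finset (Finset FPt) :=
  (fanoLines.filter (p ∈ ·)).image (· \ {p})

set_option maxRecDepth 4000 in
lemma lemA : ∀ p : FPt, ∀ S : Finset FPt, p ∉ S → insert p S ∈ fanoLines →
    S ∈ pairSets p := by decide

def pointsList : List FPt := [1,2,3,4,5,6,7]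

def linesList : List (Finset FPt) :=
  [{1,2,3},{1,4,5},{1,6,7},{2,4,6},{2,5,7},{3,4,7},{3,5,6}]

def pairList (p : FPt) : List (Finset FPt) :=
  (linesList.filter (p ∈ ·)).map (· \ {p})

set_option maxRecDepth 4000 in
lemma mem_points (p : FPt) (hp : p ∈ fanoPoints) : p ∈ pointsList := by
  revert hp; revert p; decide

set_option maxRecDepth 4000 in
lemma mem_pairs (p : FPt) (S : Finset FPt) (h : S ∈ pairSets p) : S ∈ pairList p := by
  revert h; revert S; revert p; decide

def chk : Bool :=
  pointsList.all fun p =>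
  pointsList.all fun q =>
  (pairList p).all fun A =>
  (pairList p).all fun B =>
  (pairList p).all fun C =>
  (pairList q).all fun A' =>
  (pairList q).all fun B' =>
  (pairList q).all fun C' =>
  decide (p ≠ q → A ≠ B → A ≠ C → B ≠ C → A' ≠ B' → A' ≠ C' → B' ≠ C' →
    (A ∩ A').card = 1 → (B ∩ B').card = 1 → (C ∩ C').card = 1 →
    (A ∩ A') ∪ (B ∩ B') ∪ (C ∩ C') ∈ fanoLines)

set_option maxRecDepth 16000 in
set_option maxHeartbeats 20000000 in
lemma chk_true : chk = true := by decide

lemma lemB : ∀ p ∈ fanoPoints, ∀ q ∈ fanoPoints,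
    ∀ A ∈ pairSets p, ∀ B ∈ pairSets p, ∀ C ∈ pairSets p,
    ∀ A' ∈ pairSets q, ∀ B' ∈ pairSets q, ∀ C' ∈ pairSets q,
    p ≠ q → A ≠ B → A ≠ C → B ≠ C → A' ≠ B' → A' ≠ C' → B' ≠ C' →
    (A ∩ A').card = 1 → (B ∩ B').card = 1 → (C ∩ C').card = 1 →
    (A ∩ A') ∪ (B ∩ B') ∪ (C ∩ C') ∈ fanoLines := by
  intro p hp q hq A hA B hB C hC A' hA' B' hB' C' hC'
  have h := chk_true
  unfold chk at h
  simp only [List.all_eq_true, decide_eq_true_eq] at h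
  exact h p (mem_points p hp) q (mem_points q hq) A (mem_pairs p A hA)
    B (mem_pairs p B hB) C (mem_pairs p C hC) A' (mem_pairs q A' hA')
    B' (mem_pairs q B' hB') C' (mem_pairs q C' hC')

theorem adjacent_intersections_form_line :
    ∀ v w : Pencil, G.Adj v w →
      (v.1.2 0 ∩ w.1.2 0) ∪ (v.1.2 1 ∩ w.1.2 1) ∪ (v.1.2 2 ∩ w.1.2 2) ∈ fanoLines := by
  rintro ⟨⟨p, f⟩, hp, hf, hinj⟩ ⟨⟨q, g⟩, hq, hg, hginj⟩ ⟨hne, hint⟩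
  have hmf : ∀ i, f i ∈ pairSets p := fun i => lemA p (f i) (hf i).2.1 (hf i).2.2
  have hmg : ∀ i, g i ∈ pairSets q := fun i => lemA q (g i) (hg i).2.1 (hg i).2.2
  exact lemB p hp q hq (f 0) (hmf 0) (f 1) (hmf 1) (f 2) (hmf 2)
    (g 0) (hmg 0) (g 1) (hmg 1) (g 2) (hmg 2) hne
    (fun h => by simpa using hinj h) (fun h => by simpa using hinj h)
    (fun h => by simpa using hinj h)
    (fun h => by simpa using hginj h) (fun h => by simpa using hginj h)
    (fun h => by simpa using hginj h)
    (hint 0) (hint 1) (hint 2)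
end

section
/- The open neighborhood of any vertex of G induces a 4-regular graph on 12 vertices isomorphic to the hemi-rhombicuboctahedron graph (the quotient of the rhombicuboctahedron graph by the antipodal map). -/
/-- Edge list of the hemi-rhombicuboctahedron graph (the quotient of the
rhombicuboctahedron graph by the antipodal map). -/
def hemiEdges : List (Fin 12 × Fin 12) :=
  [(0,2),(0,3),(0,7),(0,9),(1,2),(1,3),(1,5),(1,11),(2,6),(2,10),(3,4),(3,8),
   (4,6),(4,7),(4,8),(5,6),(5,7),(5,11),(6,10),(7,9),(8,10),(8,11),(9,10),(9,11)]

def hemiAdj (a b : Fin 12) : Prop := (a, b) ∈ hemiEdges ∨ (b, a) ∈ hemiEdges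

instance : DecidableRel hemiAdj := fun a b => by unfold hemiAdj; infer_instance

/-- The hemi-rhombicuboctahedron graph: a 4-regular vertex-transitive graph
on 12 vertices. -/
def hemiRCO : SimpleGraph (Fin 12) where
  Adj := hemiAdj
  symm := ⟨fun _ _ h => h.symm⟩
  loopless := ⟨by intro a; fin_cases a <;> decide⟩

instance : DecidableRel hemiRCO.Adj := fun a b => by
  change Decidable (hemiAdj a b); infer_instance

/-! ### Auxiliary machinery -/

/-- Adjacency on raw (not-yet-verified) pencil data. -/
def rAdj (x y : FPt × (Fin 3 → Finset FPt)) : Prop :=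
  x.1 ≠ y.1 ∧ ∀ i, (x.2 i ∩ y.2 i).card = 1

instance : DecidableRel rAdj := fun x y => by unfold rAdj; infer_instance

/-- The set of admissible pairs at a point. -/
def pairsOf (p : FPt) : Finset (Finset FPt) :=
  Finset.univ.filter (fun s => s.card = 2 ∧ p ∉ s ∧ insert p s ∈ fanoLines)

def pencilTab : Fin 42 → FPt × (Fin 3 → Finset FPt) :=
  ![((1 : FPt), ![({2, 3} : Finset FPt), ({4, 5} : Finset FPt), ({6, 7} : Finset FPt)]),
    ((1 : FPt), ![({2, 3} : Finset FPt), ({6, 7} : Finset FPt), ({4, 5} : Finset FPt)]),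
    ((1 : FPt), ![({4, 5} : Finset FPt), ({2, 3} : Finset FPt), ({6, 7} : Finset FPt)]),
    ((1 : FPt), ![({4, 5} : Finset FPt), ({6, 7} : Finset FPt), ({2, 3} : Finset FPt)]),
    ((1 : FPt), ![({6, 7} : Finset FPt), ({2, 3} : Finset FPt), ({4, 5} : Finset FPt)]),
    ((1 : FPt), ![({6, 7} : Finset FPt), ({4, 5} : Finset FPt), ({2, 3} : Finset FPt)]),
    ((2 : FPt), ![({1, 3} : Finset FPt), ({4, 6} : Finset FPt), ({5, 7} : Finset FPt)]),
    ((2 : FPt), ![({1, 3} : Finset FPt), ({5, 7} : Finset FPt), ({4, 6} : Finset FPt)]),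
    ((2 : FPt), ![({4, 6} : Finset FPt), ({1, 3} : Finset FPt), ({5, 7} : Finset FPt)]),
    ((2 : FPt), ![({4, 6} : Finset FPt), ({5, 7} : Finset FPt), ({1, 3} : Finset FPt)]),
    ((2 : FPt), ![({5, 7} : Finset FPt), ({1, 3} : Finset FPt), ({4, 6} : Finset FPt)]),
    ((2 : FPt), ![({5, 7} : Finset FPt), ({4, 6} : Finset FPt), ({1, 3} : Finset FPt)]),
    ((3 : FPt), ![({1, 2} : Finset FPt), ({4, 7} : Finset FPt), ({5, 6} : Finset FPt)]),
    ((3 : FPt), ![({1, 2} : Finset FPt), ({5, 6} : Finset FPt), ({4, 7} : Finset FPt)]),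
    ((3 : FPt), ![({4, 7} : Finset FPt), ({1, 2} : Finset FPt), ({5, 6} : Finset FPt)]),
    ((3 : FPt), ![({4, 7} : Finset FPt), ({5, 6} : Finset FPt), ({1, 2} : Finset FPt)]),
    ((3 : FPt), ![({5, 6} : Finset FPt), ({1, 2} : Finset FPt), ({4, 7} : Finset FPt)]),
    ((3 : FPt), ![({5, 6} : Finset FPt), ({4, 7} : Finset FPt), ({1, 2} : Finset FPt)]),
    ((4 : FPt), ![({1, 5} : Finset FPt), ({2, 6} : Finset FPt), ({3, 7} : Finset FPt)]),
    ((4 : FPt), ![({1, 5} : Finset FPt), ({3, 7} : Finset FPt), ({2, 6} : Finset FPt)]),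
    ((4 : FPt), ![({2, 6} : Finset FPt), ({1, 5} : Finset FPt), ({3, 7} : Finset FPt)]),
    ((4 : FPt), ![({2, 6} : Finset FPt), ({3, 7} : Finset FPt), ({1, 5} : Finset FPt)]),
    ((4 : FPt), ![({3, 7} : Finset FPt), ({1, 5} : Finset FPt), ({2, 6} : Finset FPt)]),
    ((4 : FPt), ![({3, 7} : Finset FPt), ({2, 6} : Finset FPt), ({1, 5} : Finset FPt)]),
    ((5 : FPt), ![({1, 4} : Finset FPt), ({2, 7} : Finset FPt), ({3, 6} : Finset FPt)]),
    ((5 : FPt), ![({1, 4} : Finset FPt), ({3, 6} : Finset FPt), ({2, 7} : Finset FPt)]),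
    ((5 : FPt), ![({2, 7} : Finset FPt), ({1, 4} : Finset FPt), ({3, 6} : Finset FPt)]),
    ((5 : FPt), ![({2, 7} : Finset FPt), ({3, 6} : Finset FPt), ({1, 4} : Finset FPt)]),
    ((5 : FPt), ![({3, 6} : Finset FPt), ({1, 4} : Finset FPt), ({2, 7} : Finset FPt)]),
    ((5 : FPt), ![({3, 6} : Finset FPt), ({2, 7} : Finset FPt), ({1, 4} : Finset FPt)]),
    ((6 : FPt), ![({1, 7} : Finset FPt), ({2, 4} : Finset FPt), ({3, 5} : Finset FPt)]),
    ((6 : FPt), ![({1, 7} : Finset FPt), ({3, 5} : Finset FPt), ({2, 4} : Finset FPt)]),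
    ((6 : FPt), ![({2, 4} : Finset FPt), ({1, 7} : Finset FPt), ({3, 5} : Finset FPt)]),
    ((6 : FPt), ![({2, 4} : Finset FPt), ({3, 5} : Finset FPt), ({1, 7} : Finset FPt)]),
    ((6 : FPt), ![({3, 5} : Finset FPt), ({1, 7} : Finset FPt), ({2, 4} : Finset FPt)]),
    ((6 : FPt), ![({3, 5} : Finset FPt), ({2, 4} : Finset FPt), ({1, 7} : Finset FPt)]),
    ((7 : FPt), ![({1, 6} : Finset FPt), ({2, 5} : Finset FPt), ({3, 4} : Finset FPt)]),
    ((7 : FPt), ![({1, 6} : Finset FPt), ({3, 4} : Finset FPt), ({2, 5} : Finset FPt)]),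
    ((7 : FPt), ![({2, 5} : Finset FPt), ({1, 6} : Finset FPt), ({3, 4} : Finset FPt)]),
    ((7 : FPt), ![({2, 5} : Finset FPt), ({3, 4} : Finset FPt), ({1, 6} : Finset FPt)]),
    ((7 : FPt), ![({3, 4} : Finset FPt), ({1, 6} : Finset FPt), ({2, 5} : Finset FPt)]),
    ((7 : FPt), ![({3, 4} : Finset FPt), ({2, 5} : Finset FPt), ({1, 6} : Finset FPt)])]

def nbrTab : Fin 42 → Fin 12 → Fin 42 :=
  ![![6,7,12,13,20,22,26,28,33,35,39,41],
    ![6,7,12,13,27,29,21,23,38,40,32,34],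
    ![8,10,14,16,18,19,24,25,35,33,41,39],
    ![9,11,15,17,19,18,25,24,34,32,40,38],
    ![8,10,14,16,29,27,23,21,36,37,30,31],
    ![9,11,15,17,28,26,22,20,37,36,31,30],
    ![0,1,12,13,18,23,30,35,25,28,37,40],
    ![0,1,12,13,31,34,19,22,36,41,24,29],
    ![2,4,14,16,20,21,32,33,28,25,40,37],
    ![3,5,15,17,21,20,33,32,29,24,41,36],
    ![2,4,14,16,34,31,22,19,38,39,26,27],
    ![3,5,15,17,35,30,23,18,39,38,27,26],
    ![0,1,6,7,19,21,37,39,24,26,30,32],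
    ![0,1,6,7,36,38,18,20,31,33,25,27],
    ![2,4,8,10,22,23,40,41,26,24,32,30],
    ![3,5,9,11,23,22,41,40,27,25,33,31],
    ![2,4,8,10,38,36,20,18,34,35,28,29],
    ![3,5,9,11,39,37,21,19,35,34,29,28],
    ![2,3,24,25,6,11,30,35,13,16,36,38],
    ![2,3,24,25,31,34,7,10,37,39,12,17],
    ![0,5,26,28,8,9,32,33,16,13,38,36],
    ![1,4,27,29,9,8,33,32,17,12,39,37],
    ![0,5,26,28,34,31,10,7,40,41,14,15],
    ![1,4,27,29,35,30,11,6,41,40,15,14],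
    ![2,3,18,19,7,9,36,41,12,14,30,32],
    ![2,3,18,19,37,40,6,8,31,33,13,15],
    ![0,5,20,22,10,11,38,39,14,12,32,30],
    ![1,4,21,23,11,10,39,38,15,13,33,31],
    ![0,5,20,22,40,37,8,6,34,35,16,17],
    ![1,4,21,23,41,36,9,7,35,34,17,16],
    ![4,5,36,37,6,11,18,23,12,14,24,26],
    ![4,5,36,37,19,22,7,10,25,27,13,15],
    ![1,3,38,40,8,9,20,21,14,12,26,24],
    ![0,2,39,41,9,8,21,20,15,13,27,25],
    ![1,3,38,40,22,19,10,7,28,29,16,17],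
    ![0,2,39,41,23,18,11,6,29,28,17,16],
    ![4,5,30,31,7,9,24,29,13,16,18,20],
    ![4,5,30,31,25,28,6,8,19,21,12,17],
    ![1,3,32,34,10,11,26,27,16,13,20,18],
    ![0,2,33,35,11,10,27,26,17,12,21,19],
    ![1,3,32,34,28,25,8,6,22,23,14,15],
    ![0,2,33,35,29,24,9,7,23,22,15,14]]


lemma pencilTab_isPencil : ∀ k : Fin 42, IsPencil (pencilTab k) := by decide

lemma pencilTab_inj : ∀ k l : Fin 42, pencilTab k = pencilTab l → k = l := by decide

set_option maxRecDepth 20000 in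
lemma pencilTab_complete : ∀ p ∈ fanoPoints, ∀ a ∈ pairsOf p, ∀ b ∈ pairsOf p,
    ∀ c ∈ pairsOf p, a ≠ b → a ≠ c → b ≠ c →
    ∃ k : Fin 42, pencilTab k = (p, ![a, b, c]) := by decide

set_option maxRecDepth 20000 in
set_option maxHeartbeats 4000000 in
lemma nbrTab_good : ∀ k : Fin 42,
    (∀ i, rAdj (pencilTab k) (pencilTab (nbrTab k i))) ∧
    (∀ i j, nbrTab k i = nbrTab k j → i = j) ∧
    (∀ l : Fin 42, rAdj (pencilTab k) (pencilTab l) → ∃ i, nbrTab k i = l) ∧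
    (∀ i j, rAdj (pencilTab (nbrTab k i)) (pencilTab (nbrTab k j)) ↔ hemiRCO.Adj i j) := by
  decide

/-- Every pencil appears in the table. -/
lemma pencil_cases (v : Pencil) : ∃ k : Fin 42, pencilTab k = v.1 := by
  obtain ⟨⟨p, f⟩, hp, hpr, hinj⟩ := v
  have hf : f = ![f 0, f 1, f 2] := by
    funext i; fin_cases i <;> rfl
  have h0 : f 0 ∈ pairsOf p := Finset.mem_filter.2 ⟨Finset.mem_univ _, hpr 0⟩
  have h1 : f 1 ∈ pairsOf p := Finset.mem_filter.2 ⟨Finset.mem_univ _, hpr 1⟩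
  have h2 : f 2 ∈ pairsOf p := Finset.mem_filter.2 ⟨Finset.mem_univ _, hpr 2⟩
  have d01 : f 0 ≠ f 1 := fun h => absurd (hinj h) (by decide)
  have d02 : f 0 ≠ f 2 := fun h => absurd (hinj h) (by decide)
  have d12 : f 1 ≠ f 2 := fun h => absurd (hinj h) (by decide)
  have key := pencilTab_complete p hp (f 0) h0 (f 1) h1 (f 2) h2 d01 d02 d12
  rwa [← hf] at key

lemma mkIso (v : Pencil) (k : Fin 42) (hk : pencilTab k = v.1) :
    Nonempty ((G.induce (G.neighborSet v)) ≃g hemiRCO) := by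
  obtain ⟨hadj, hinj, hsurj, hiso⟩ := nbrTab_good k
  rw [hk] at hadj hsurj
  have hGadj : ∀ w : Pencil, G.Adj v w ↔ rAdj v.1 w.1 := fun w => Iff.rfl
  let F : Fin 12 → ↥(G.neighborSet v) := fun i =>
    ⟨⟨pencilTab (nbrTab k i), pencilTab_isPencil _⟩, (hGadj _).2 (hadj i)⟩
  have hFbij : Function.Bijective F := by
    constructor
    · intro i j h
      exact hinj i j (pencilTab_inj _ _ (congrArg (fun w => w.1.1) h))
    · rintro ⟨w, hw⟩
      obtain ⟨l, hl⟩ := pencil_cases w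
      obtain ⟨i, hi⟩ := hsurj l (by rw [hl]; exact (hGadj w).1 hw)
      refine ⟨i, ?_⟩
      apply Subtype.ext; apply Subtype.ext
      show pencilTab (nbrTab k i) = w.1
      rw [hi, hl]
  let e := Equiv.ofBijective F hFbij
  refine ⟨⟨e.symm, ?_⟩⟩
  intro a b
  rw [← hiso]
  have ha : pencilTab (nbrTab k (e.symm a)) = (a : Pencil).1 :=
    congrArg (fun w => w.1.1) (e.apply_symm_apply a)
  have hb : pencilTab (nbrTab k (e.symm b)) = (b : Pencil).1 :=
    congrArg (fun w => w.1.1) (e.apply_symm_apply b)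
  rw [ha, hb]
  exact Iff.rfl

theorem neighborhood_is_hemi_rhombicuboctahedron :
    (∀ a : Fin 12, hemiRCO.degree a = 4) ∧
    ∀ v : Pencil, Nonempty ((G.induce (G.neighborSet v)) ≃g hemiRCO) := by
  constructor
  · decide
  · intro v
    obtain ⟨k, hk⟩ := pencil_cases v
    exact mkIso v k hk
end
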